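/- The naive rule-by-rule translation of closed free-variable tableaux into GS3 is unsound: there exists a closed free-variable tableau with unifier σ (namely one refuting ¬∃x (D(x) → ∀y D(y)) with σ = {X := c}) such that instantiating by σ and mapping each tableau rule to the corresponding GS3 rule in the same order produces a tree that is not a GS3 derivation, because a δ-rule's constant fails the freshness condition. -/

import Mathlib

/-- First-order terms: de Bruijn bound variables, free (meta)variables, function applications. -/
inductive Tm : Type
  | var : ℕ → Tm
  | mvar : ℕ → Tm
  | fn : ℕ → List Tm → Tm

/-- First-order formulas (de Bruijn representation for quantifiers). -/
inductive Fm : Type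
  | atom : ℕ → List Tm → Fm
  | neg : Fm → Fm
  | and : Fm → Fm → Fm
  | or : Fm → Fm → Fm
  | imp : Fm → Fm → Fm
  | all : Fm → Fm
  | ex : Fm → Fm

mutual
/-- Apply a substitution of metavariables to a term. -/
def substTm (σ : ℕ → Tm) : Tm → Tm
  | .var n => .var n
  | .mvar X => σ X
  | .fn f ts => .fn f (substTms σ ts)
def substTms (σ : ℕ → Tm) : List Tm → List Tm
  | [] => []
  | t :: ts => substTm σ t :: substTms σ ts
end

mutual
/-- Replace bound variable `k` by the term `u` (assumed closed), shifting down. -/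
def instTm (u : Tm) (k : ℕ) : Tm → Tm
  | .var n => if n = k then u else if k < n then .var (n - 1) else .var n
  | .mvar X => .mvar X
  | .fn f ts => .fn f (instTms u k ts)
def instTms (u : Tm) (k : ℕ) : List Tm → List Tm
  | [] => []
  | t :: ts => instTm u k t :: instTms u k ts
end

mutual
/-- Metavariables occurring in a term. -/
def mvarsTm : Tm → List ℕ
  | .var _ => []
  | .mvar X => [X]
  | .fn _ ts => mvarsTms ts
def mvarsTms : List Tm → List ℕ
  | [] => []
  | t :: ts => mvarsTm t ++ mvarsTms ts
end

def Fm.substF (σ : ℕ → Tm) : Fm → Fm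
  | .atom P ts => .atom P (substTms σ ts)
  | .neg A => .neg (A.substF σ)
  | .and A B => .and (A.substF σ) (B.substF σ)
  | .or A B => .or (A.substF σ) (B.substF σ)
  | .imp A B => .imp (A.substF σ) (B.substF σ)
  | .all A => .all (A.substF σ)
  | .ex A => .ex (A.substF σ)

def Fm.instF (u : Tm) (k : ℕ) : Fm → Fm
  | .atom P ts => .atom P (instTms u k ts)
  | .neg A => .neg (A.instF u k)
  | .and A B => .and (A.instF u k) (B.instF u k)
  | .or A B => .or (A.instF u k) (B.instF u k)
  | .imp A B => .imp (A.instF u k) (B.instF u k)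
  | .all A => .all (A.instF u (k + 1))
  | .ex A => .ex (A.instF u (k + 1))

/-- Instantiate the outermost bound variable of a quantified formula body. -/
def Fm.inst1 (u : Tm) (A : Fm) : Fm := A.instF u 0

def Fm.mvarsF : Fm → List ℕ
  | .atom _ ts => mvarsTms ts
  | .neg A => A.mvarsF
  | .and A B => A.mvarsF ++ B.mvarsF
  | .or A B => A.mvarsF ++ B.mvarsF
  | .imp A B => A.mvarsF ++ B.mvarsF
  | .all A => A.mvarsF
  | .ex A => A.mvarsF

/-- Occurrence of a subterm satisfying `P` inside a term. -/
inductive OccT (P : Tm → Prop) : Tm → Prop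
  | here {t} : P t → OccT P t
  | arg {f ts t} : t ∈ ts → OccT P t → OccT P (.fn f ts)

/-- Occurrence of a subterm satisfying `P` inside a formula. -/
inductive OccF (P : Tm → Prop) : Fm → Prop
  | atom {n ts t} : t ∈ ts → OccT P t → OccF P (.atom n ts)
  | neg {A} : OccF P A → OccF P (.neg A)
  | andL {A B} : OccF P A → OccF P (.and A B)
  | andR {A B} : OccF P B → OccF P (.and A B)
  | orL {A B} : OccF P A → OccF P (.or A B)
  | orR {A B} : OccF P B → OccF P (.or A B)
  | impL {A B} : OccF P A → OccF P (.imp A B)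
  | impR {A B} : OccF P B → OccF P (.imp A B)
  | all {A} : OccF P A → OccF P (.all A)
  | ex {A} : OccF P A → OccF P (.ex A)

/-- The function/constant symbol `c` occurs in the term. -/
def SymInTm (c : ℕ) : Tm → Prop := OccT (fun u => ∃ ts, u = .fn c ts)
/-- The function/constant symbol `c` occurs in the formula. -/
def SymInFm (c : ℕ) : Fm → Prop := OccF (fun u => ∃ ts, u = .fn c ts)
/-- The metavariable `X` occurs in the formula. -/
def MvarInFm (X : ℕ) : Fm → Prop := OccF (fun u => u = .mvar X)
/-- The term `u` occurs as a subterm in the formula. -/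
def TmInFm (u : Tm) : Fm → Prop := OccF (fun v => v = u)

/-- GS3: one-sided, cut-free sequent calculus with implicit contraction and
explicit weakening; `GS3 Δ` means the sequent `Δ ⊢` is derivable. -/
inductive GS3 : Multiset Fm → Prop
  | ax {Δ A} : A ∈ Δ → Fm.neg A ∈ Δ → GS3 Δ
  | weak {Δ A} : GS3 Δ → GS3 (A ::ₘ Δ)
  | andE {Δ A B} : Fm.and A B ∈ Δ → GS3 (A ::ₘ B ::ₘ Δ) → GS3 Δ
  | negOrE {Δ A B} : Fm.neg (Fm.or A B) ∈ Δ → GS3 (Fm.neg A ::ₘ Fm.neg B ::ₘ Δ) → GS3 Δ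
  | negImpE {Δ A B} : Fm.neg (Fm.imp A B) ∈ Δ → GS3 (A ::ₘ Fm.neg B ::ₘ Δ) → GS3 Δ
  | negNegE {Δ A} : Fm.neg (Fm.neg A) ∈ Δ → GS3 (A ::ₘ Δ) → GS3 Δ
  | orE {Δ A B} : Fm.or A B ∈ Δ → GS3 (A ::ₘ Δ) → GS3 (B ::ₘ Δ) → GS3 Δ
  | impE {Δ A B} : Fm.imp A B ∈ Δ → GS3 (Fm.neg A ::ₘ Δ) → GS3 (B ::ₘ Δ) → GS3 Δ
  | negAndE {Δ A B} : Fm.neg (Fm.and A B) ∈ Δ → GS3 (Fm.neg A ::ₘ Δ) → GS3 (Fm.neg B ::ₘ Δ) → GS3 Δ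
  | allE {Δ A} (t : Tm) : Fm.all A ∈ Δ → GS3 (Fm.inst1 t A ::ₘ Δ) → GS3 Δ
  | negExE {Δ A} (t : Tm) : Fm.neg (Fm.ex A) ∈ Δ → GS3 (Fm.neg (Fm.inst1 t A) ::ₘ Δ) → GS3 Δ
  | exE {Δ A} (c : ℕ) : Fm.ex A ∈ Δ → (∀ B ∈ Δ, ¬ SymInFm c B) →
      GS3 (Fm.inst1 (Tm.fn c []) A ::ₘ Δ) → GS3 Δ
  | negAllE {Δ A} (c : ℕ) : Fm.neg (Fm.all A) ∈ Δ → (∀ B ∈ Δ, ¬ SymInFm c B) →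
      GS3 (Fm.neg (Fm.inst1 (Tm.fn c []) A) ::ₘ Δ) → GS3 Δ
/-- A rule application label (shared between tableaux and GS3 proof-trees). -/
inductive RuleApp : Type
  | andR (A B : Fm) | negOrR (A B : Fm) | negImpR (A B : Fm) | negNegR (A : Fm)
  | orR (A B : Fm) | impR (A B : Fm) | negAndR (A B : Fm)
  | allR (A : Fm) (t : Tm) | negExR (A : Fm) (t : Tm)
  | exR (A : Fm) (t : Tm) | negAllR (A : Fm) (t : Tm)
  | closureR (A B : Fm)
  | weakR (Δ' : Multiset Fm)

/-- The premises (children multisets) generated by a rule applied to `Δ`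
(rules are non-destructive: the principal formula is kept). -/
def RuleApp.kids (Δ : Multiset Fm) : RuleApp → List (Multiset Fm)
  | .andR A B => [A ::ₘ B ::ₘ Δ]
  | .negOrR A B => [Fm.neg A ::ₘ Fm.neg B ::ₘ Δ]
  | .negImpR A B => [A ::ₘ Fm.neg B ::ₘ Δ]
  | .negNegR A => [A ::ₘ Δ]
  | .orR A B => [A ::ₘ Δ, B ::ₘ Δ]
  | .impR A B => [Fm.neg A ::ₘ Δ, B ::ₘ Δ]
  | .negAndR A B => [Fm.neg A ::ₘ Δ, Fm.neg B ::ₘ Δ]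
  | .allR A t => [Fm.inst1 t A ::ₘ Δ]
  | .negExR A t => [Fm.neg (Fm.inst1 t A) ::ₘ Δ]
  | .exR A t => [Fm.inst1 t A ::ₘ Δ]
  | .negAllR A t => [Fm.neg (Fm.inst1 t A) ::ₘ Δ]
  | .closureR _ _ => []
  | .weakR Δ' => [Δ']

def RuleApp.isClosure : RuleApp → Prop
  | .closureR _ _ => True
  | _ => False

def RuleApp.isAlpha : RuleApp → Prop
  | .andR _ _ | .negOrR _ _ | .negImpR _ _ | .negNegR _ => True
  | _ => False

def RuleApp.isBeta : RuleApp → Prop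
  | .orR _ _ | .impR _ _ | .negAndR _ _ => True
  | _ => False

def RuleApp.isDelta : RuleApp → Prop
  | .exR _ _ | .negAllR _ _ => True
  | _ => False

/-- Instantiation of a rule application by a substitution of metavariables. -/
def RuleApp.substR (σ : ℕ → Tm) : RuleApp → RuleApp
  | .andR A B => .andR (A.substF σ) (B.substF σ)
  | .negOrR A B => .negOrR (A.substF σ) (B.substF σ)
  | .negImpR A B => .negImpR (A.substF σ) (B.substF σ)
  | .negNegR A => .negNegR (A.substF σ)
  | .orR A B => .orR (A.substF σ) (B.substF σ)
  | .impR A B => .impR (A.substF σ) (B.substF σ)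
  | .negAndR A B => .negAndR (A.substF σ) (B.substF σ)
  | .allR A t => .allR (A.substF σ) (substTm σ t)
  | .negExR A t => .negExR (A.substF σ) (substTm σ t)
  | .exR A t => .exR (A.substF σ) (substTm σ t)
  | .negAllR A t => .negAllR (A.substF σ) (substTm σ t)
  | .closureR A B => .closureR (A.substF σ) (B.substF σ)
  | .weakR Δ' => .weakR (Δ'.map (Fm.substF σ))

/-- Trees of multisets of formulas: `leaf` is an *open* leaf; internal nodes are
labelled with the rule applied there (a `closureR` node with no children is a closed leaf). -/
inductive FTree : Type
  | leaf : Multiset Fm → FTree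
  | node : Multiset Fm → RuleApp → List FTree → FTree

def FTree.root : FTree → Multiset Fm
  | .leaf Δ => Δ
  | .node Δ _ _ => Δ

/-- The subtree at a path (children indexed by position). -/
def FTree.subAt (t : FTree) : List ℕ → Option FTree
  | [] => some t
  | i :: p =>
    match t with
    | .leaf _ => none
    | .node _ _ ts =>
      match ts[i]? with
      | some t' => t'.subAt p
      | none => none

/-- The multiset at an open leaf located at the given path, if any. -/
def FTree.openLeafAt (t : FTree) (p : List ℕ) : Option (Multiset Fm) :=
  match t.subAt p with
  | some (.leaf Δ) => some Δ
  | _ => none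

/-- The rule applied at the node located at the given path, if any. -/
def FTree.ruleAt (t : FTree) (p : List ℕ) : Option RuleApp :=
  match t.subAt p with
  | some (.node _ r _) => some r
  | _ => none

/-- A tree is closed when it has no open leaves. -/
def FTree.closedT (t : FTree) : Prop := ∀ p Δ, t.subAt p ≠ some (.leaf Δ)

/-- Extend a tree by applying rule `r` at the open leaf located at path `p`. -/
def FTree.extend (r : RuleApp) : List ℕ → FTree → FTree
  | [], .leaf Δ => .node Δ r ((r.kids Δ).map .leaf)
  | [], t => t
  | _ :: _, .leaf Δ => .leaf Δ
  | i :: p, .node Δ r' ts => .node Δ r' (ts.modify i (FTree.extend r p))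
  termination_by p _ => p.length

/-- Well-formed trees w.r.t. a side-condition `Ok` on rule applications:
children carry exactly the premises generated by the rule. -/
inductive WFT (Ok : Multiset Fm → RuleApp → Prop) : FTree → Prop
  | leaf {Δ} : WFT Ok (.leaf Δ)
  | node {Δ r ts} : Ok Δ r → ts.map FTree.root = r.kids Δ →
      (∀ t ∈ ts, WFT Ok t) → WFT Ok (.node Δ r ts)

/-- Side conditions of GS3: principal formula present, genuinely fresh
constants in δ-rules, arbitrary terms in γ-rules, axiom on `A, ¬A`. -/
def okGS3 : Multiset Fm → RuleApp → Prop
  | Δ, .andR A B => Fm.and A B ∈ Δ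
  | Δ, .negOrR A B => Fm.neg (Fm.or A B) ∈ Δ
  | Δ, .negImpR A B => Fm.neg (Fm.imp A B) ∈ Δ
  | Δ, .negNegR A => Fm.neg (Fm.neg A) ∈ Δ
  | Δ, .orR A B => Fm.or A B ∈ Δ
  | Δ, .impR A B => Fm.imp A B ∈ Δ
  | Δ, .negAndR A B => Fm.neg (Fm.and A B) ∈ Δ
  | Δ, .allR A _ => Fm.all A ∈ Δ
  | Δ, .negExR A _ => Fm.neg (Fm.ex A) ∈ Δ
  | Δ, .exR A t => Fm.ex A ∈ Δ ∧ ∃ c, t = Tm.fn c [] ∧ ∀ B ∈ Δ, ¬ SymInFm c B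
  | Δ, .negAllR A t => Fm.neg (Fm.all A) ∈ Δ ∧ ∃ c, t = Tm.fn c [] ∧ ∀ B ∈ Δ, ¬ SymInFm c B
  | Δ, .closureR A B => A ∈ Δ ∧ B ∈ Δ ∧ B = Fm.neg A
  | Δ, .weakR Δ' => Δ' ⊆ Δ

/-- Side conditions of free-variable tableaux with on-the-fly inner
Skolemization, relative to the global unifier `σ`: γ-rules use fresh
metavariables, δ-rules use a fresh Skolem symbol applied to the metavariables
of the Skolemized formula, closure needs the two formulas to be σ-opposite. -/
def okTabFV (σ : ℕ → Tm) : Multiset Fm → RuleApp → Prop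
  | Δ, .andR A B => Fm.and A B ∈ Δ
  | Δ, .negOrR A B => Fm.neg (Fm.or A B) ∈ Δ
  | Δ, .negImpR A B => Fm.neg (Fm.imp A B) ∈ Δ
  | Δ, .negNegR A => Fm.neg (Fm.neg A) ∈ Δ
  | Δ, .orR A B => Fm.or A B ∈ Δ
  | Δ, .impR A B => Fm.imp A B ∈ Δ
  | Δ, .negAndR A B => Fm.neg (Fm.and A B) ∈ Δ
  | Δ, .allR A t => Fm.all A ∈ Δ ∧ ∃ X, t = Tm.mvar X ∧ ∀ B ∈ Δ, ¬ MvarInFm X B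
  | Δ, .negExR A t => Fm.neg (Fm.ex A) ∈ Δ ∧ ∃ X, t = Tm.mvar X ∧ ∀ B ∈ Δ, ¬ MvarInFm X B
  | Δ, .exR A t => Fm.ex A ∈ Δ ∧
      ∃ f, t = Tm.fn f (((Fm.ex A).mvarsF.dedup).map Tm.mvar) ∧ ∀ B ∈ Δ, ¬ SymInFm f B
  | Δ, .negAllR A t => Fm.neg (Fm.all A) ∈ Δ ∧
      ∃ f, t = Tm.fn f (((Fm.neg (Fm.all A)).mvarsF.dedup).map Tm.mvar) ∧ ∀ B ∈ Δ, ¬ SymInFm f B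
  | Δ, .closureR A B => A ∈ Δ ∧ B ∈ Δ ∧ Fm.substF σ B = Fm.neg (Fm.substF σ A)
  | _, .weakR _ => False

/-- Initial part of a tree (same root and rules up to some open leaves;
a closed leaf of `T` may not be replaced by an open leaf). -/
inductive Initial : FTree → FTree → Prop
  | leafLeaf {Δ} : Initial (.leaf Δ) (.leaf Δ)
  | openLeaf {Δ r ts} : ¬ r.isClosure → Initial (.leaf Δ) (.node Δ r ts)
  | node {Δ r ts₀ ts} : ts₀.length = ts.length →
      (∀ (i : ℕ) t₀ t, ts₀[i]? = some t₀ → ts[i]? = some t → Initial t₀ t) →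
      Initial (.node Δ r ts₀) (.node Δ r ts)

/-- A (total) link from an open GS3 proof-tree `π` to a tableau `T` with
unifier `σ`: each open leaf of `π` is mapped to an open leaf of `T` whose
σ-instantiated formulas all appear in the sequent of the leaf of `π`. -/
structure Link (σ : ℕ → Tm) (π T : FTree) where
  μ : List ℕ → List ℕ
  maps : ∀ p Γs, π.openLeafAt p = some Γs →
    ∃ Δ, T.openLeafAt (μ p) = some Δ ∧ ∀ A ∈ Δ, Fm.substF σ A ∈ Γs

/-- A partial link between two GS3 proof-trees. -/
structure PLink (π θ : FTree) where
  μ : List ℕ → Option (List ℕ)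
  maps : ∀ p Γs q, π.openLeafAt p = some Γs → μ p = some q →
    ∃ Δ, θ.openLeafAt q = some Δ ∧ ∀ A ∈ Δ, A ∈ Γs

/-- A bilink: two partial links with disjoint domains covering all open leaves. -/
structure Bilink (π θ₀ θ₁ : FTree) where
  l0 : PLink π θ₀
  l1 : PLink π θ₁
  disj : ∀ p, (l0.μ p).isSome → (l1.μ p).isSome → False
  cover : ∀ p Γs, π.openLeafAt p = some Γs → (l0.μ p).isSome ∨ (l1.μ p).isSome

/-- A formula appearing somewhere in a tree. -/
inductive InTree (A : Fm) : FTree → Prop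
  | leaf {Δ} : A ∈ Δ → InTree A (.leaf Δ)
  | here {Δ r ts} : A ∈ Δ → InTree A (.node Δ r ts)
  | child {Δ r ts t} : t ∈ ts → InTree A t → InTree A (.node Δ r ts)

mutual
/-- Number of rule applications in a tree. -/
def FTree.ruleCount : FTree → ℕ
  | .leaf _ => 0
  | .node _ _ ts => 1 + ruleCountL ts
def ruleCountL : List FTree → ℕ
  | [] => 0
  | t :: ts => t.ruleCount + ruleCountL ts
end

mutual
/-- Instantiate all formulas of a tree by a substitution (the naive translation). -/
def FTree.substT (σ : ℕ → Tm) : FTree → FTree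
  | .leaf Δ => .leaf (Δ.map (Fm.substF σ))
  | .node Δ r ts => .node (Δ.map (Fm.substF σ)) (r.substR σ) (substTL σ ts)
def substTL (σ : ℕ → Tm) : List FTree → List FTree
  | [] => []
  | t :: ts => t.substT σ :: substTL σ ts
end

/-- The negated drinker formula `¬∃x (D(x) → ∀y D(y))` (with `D` the predicate
symbol `0`). -/
def negDrinker : Fm :=
  Fm.neg (Fm.ex (Fm.imp (Fm.atom 0 [Tm.var 0]) (Fm.all (Fm.atom 0 [Tm.var 0]))))


/-! ### Auxiliary material for the proof -/

section Aux

lemma occF_atom' {P : Tm → Prop} {n ts} (h : OccF P (.atom n ts)) : ∃ t ∈ ts, OccT P t := by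
  cases h with | atom h1 h2 => exact ⟨_, h1, h2⟩

lemma occF_neg' {P : Tm → Prop} {A} (h : OccF P (.neg A)) : OccF P A := by
  cases h; assumption

lemma occF_imp' {P : Tm → Prop} {A B} (h : OccF P (.imp A B)) : OccF P A ∨ OccF P B := by
  cases h with
  | impL h => exact Or.inl h
  | impR h => exact Or.inr h

lemma occF_all' {P : Tm → Prop} {A} (h : OccF P (.all A)) : OccF P A := by
  cases h; assumption

lemma occF_ex' {P : Tm → Prop} {A} (h : OccF P (.ex A)) : OccF P A := by
  cases h; assumption

lemma occT_var' {P : Tm → Prop} {n} (h : OccT P (.var n)) : P (.var n) := by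
  cases h; assumption

lemma occT_mvar' {P : Tm → Prop} {n} (h : OccT P (.mvar n)) : P (.mvar n) := by
  cases h; assumption

def D0 : Fm := .atom 0 [.var 0]
def DX : Fm := .atom 0 [.mvar 0]
def Dc : Fm := .atom 0 [.fn 5 []]
def bodyA : Fm := .imp D0 (.all D0)
def F1 : Fm := .neg (.imp DX (.all D0))
def F1' : Fm := .neg (.imp Dc (.all D0))
def F3 : Fm := .neg Dc

lemma noSym_D0 {c} : ¬ SymInFm c D0 := by
  intro h
  obtain ⟨t, ht, h⟩ := occF_atom' h
  rw [List.mem_singleton] at ht; subst ht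
  obtain ⟨ts, h⟩ := occT_var' h
  cases h

lemma noSym_DX {c} : ¬ SymInFm c DX := by
  intro h
  obtain ⟨t, ht, h⟩ := occF_atom' h
  rw [List.mem_singleton] at ht; subst ht
  obtain ⟨ts, h⟩ := occT_mvar' h
  cases h

lemma noSym_allD0 {c} : ¬ SymInFm c (.all D0) := fun h => noSym_D0 (occF_all' h)

lemma noSym_negAllD0 {c} : ¬ SymInFm c (Fm.neg (.all D0)) := fun h => noSym_allD0 (occF_neg' h)

lemma noSym_negDrinker {c} : ¬ SymInFm c negDrinker := by
  intro h
  rcases occF_imp' (occF_ex' (occF_neg' h)) with h | h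
  · exact noSym_D0 h
  · exact noSym_allD0 h

lemma noSym_F1 {c} : ¬ SymInFm c F1 := by
  intro h
  rcases occF_imp' (occF_neg' h) with h | h
  · exact noSym_DX h
  · exact noSym_allD0 h

lemma noMvar_D0 {X} : ¬ MvarInFm X D0 := by
  intro h
  obtain ⟨t, ht, h⟩ := occF_atom' h
  rw [List.mem_singleton] at ht; subst ht
  cases occT_var' h

lemma noMvar_negDrinker {X} : ¬ MvarInFm X negDrinker := by
  intro h
  rcases occF_imp' (occF_ex' (occF_neg' h)) with h | h
  · exact noMvar_D0 h
  · exact noMvar_D0 (occF_all' h)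

def Dl0 : Multiset Fm := {negDrinker}
def Dl1 : Multiset Fm := F1 ::ₘ Dl0
def Dl2 : Multiset Fm := DX ::ₘ (Fm.neg (.all D0)) ::ₘ Dl1
def Dl3 : Multiset Fm := F3 ::ₘ Dl2
def sg : ℕ → Tm := fun _ => .fn 5 []

def T0 : FTree :=
  .node Dl0 (.negExR bodyA (.mvar 0))
    [.node Dl1 (.negImpR DX (.all D0))
      [.node Dl2 (.negAllR D0 (.fn 5 []))
        [.node Dl3 (.closureR DX F3) []]]]

def Dl1' : Multiset Fm := F1' ::ₘ Dl0
def Dl2' : Multiset Fm := Dc ::ₘ (Fm.neg (.all D0)) ::ₘ Dl1'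
def Dl3' : Multiset Fm := F3 ::ₘ Dl2'

def T1 : FTree :=
  .node Dl0 (.negExR bodyA (.fn 5 []))
    [.node Dl1' (.negImpR Dc (.all D0))
      [.node Dl2' (.negAllR D0 (.fn 5 []))
        [.node Dl3' (.closureR Dc F3) []]]]

lemma substT_T0 : FTree.substT sg T0 = T1 := by rfl

lemma symIn_Dc : SymInFm 5 Dc :=
  OccF.atom (List.mem_singleton_self _) (OccT.here ⟨[], rfl⟩)

lemma noLeaf_node_nil {Dl r} : ∀ p G, (FTree.node Dl r []).subAt p ≠ some (.leaf G) := by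
  intro p G h
  cases p with
  | nil => simp [FTree.subAt] at h
  | cons i p => simp [FTree.subAt] at h

lemma noLeaf_node_single {Dl r t} (ht : ∀ p G, t.subAt p ≠ some (.leaf G)) :
    ∀ p G, (FTree.node Dl r [t]).subAt p ≠ some (.leaf G) := by
  intro p G h
  cases p with
  | nil => simp [FTree.subAt] at h
  | cons i p =>
    cases i with
    | zero => exact ht p G (by simpa [FTree.subAt] using h)
    | succ i => simp [FTree.subAt] at h

lemma wft_T0 : WFT (okTabFV sg) T0 := by
  refine WFT.node ?_ rfl ?_
  · refine ⟨Multiset.mem_singleton_self _, 0, rfl, ?_⟩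
    intro B hB
    rw [Dl0, Multiset.mem_singleton] at hB; subst hB
    exact noMvar_negDrinker
  intro t ht
  rw [List.mem_singleton] at ht; subst ht
  refine WFT.node (Multiset.mem_cons_self _ _) rfl ?_
  intro t ht
  rw [List.mem_singleton] at ht; subst ht
  refine WFT.node ?_ rfl ?_
  · refine ⟨Multiset.mem_cons_of_mem (Multiset.mem_cons_self _ _), 5, rfl, ?_⟩
    intro B hB
    simp only [Dl2, Dl1, Dl0, Multiset.mem_cons, Multiset.mem_singleton] at hB
    rcases hB with rfl | rfl | rfl | rfl
    · exact noSym_DX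
    · exact noSym_negAllD0
    · exact noSym_F1
    · exact noSym_negDrinker
  intro t ht
  rw [List.mem_singleton] at ht; subst ht
  refine WFT.node ?_ rfl ?_
  · refine ⟨?_, Multiset.mem_cons_self _ _, rfl⟩
    exact Multiset.mem_cons_of_mem (Multiset.mem_cons_self _ _)
  · intro t ht; cases ht

lemma closed_T0 : T0.closedT := by
  refine noLeaf_node_single (noLeaf_node_single (noLeaf_node_single noLeaf_node_nil))

lemma not_wft_T1 : ¬ WFT okGS3 T1 := by
  intro h
  cases h with
  | node h1 h2 h3 =>
  have h := h3 _ (List.mem_singleton_self _)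
  cases h with
  | node h1 h2 h3 =>
  have h := h3 _ (List.mem_singleton_self _)
  cases h with
  | node h1 h2 h3 =>
  obtain ⟨-, c, hc, hfr⟩ := h1
  have hc5 : 5 = c := by injection hc
  subst hc5
  exact hfr Dc (Multiset.mem_cons_self _ _) symIn_Dc

end Aux

/-- The naive rule-by-rule translation of closed free-variable tableaux into
GS3 is unsound: there is a closed free-variable tableau with unifier `σ`,
refuting `¬∃x (D(x) → ∀y D(y))`, whose naive translation — instantiating
everything by `σ` and mapping each tableau rule to the GS3 rule of the same
name in the same order — is not a GS3 derivation, because some δ-rule node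
introduces a constant that already occurs in its sequent, violating the GS3
freshness condition. -/
theorem naive_translation_unsound :
    ∃ (T : FTree) (σ : ℕ → Tm),
      WFT (okTabFV σ) T ∧ T.closedT ∧ T.root = {negDrinker} ∧
      ¬ WFT okGS3 (FTree.substT σ T) ∧
      ∃ (p : List ℕ) (Δ : Multiset Fm) (r : RuleApp) (ts : List FTree),
        (FTree.substT σ T).subAt p = some (FTree.node Δ r ts) ∧ r.isDelta ∧
        ∃ A t, (r = RuleApp.exR A t ∨ r = RuleApp.negAllR A t) ∧
          ∃ c, t = Tm.fn c [] ∧ ∃ B ∈ Δ, SymInFm c B := by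
  refine ⟨T0, sg, wft_T0, closed_T0, rfl, ?_, [0, 0], Dl2',
    .negAllR D0 (.fn 5 []), [.node Dl3' (.closureR Dc F3) []], ?_, trivial,
    D0, .fn 5 [], Or.inr rfl, 5, rfl, Dc, Multiset.mem_cons_self _ _, symIn_Dc⟩
  · rw [substT_T0]; exact not_wft_T1
  · rw [substT_T0]; rfl
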